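/- Let u = (u_1,…,u_m) be a positive-integer-valued vector with u_1 < u_2 < … < u_m (strictly increasing). Let v = (v_1,…,v_l) consist of the elements of the interval {u_1, u_1+1, …, u_m} \ {u_1,…,u_m}, arranged in increasing order (so l = u_m − u_1 + 1 − m). Then (v_1,…,v_l,π_1,…,π_m) ∈ PF(u_m−u_1+1, u_m) if and only if (π_1,…,π_m) ∈ PF(u), the set of u-parking functions of length m. -/

import Mathlib

open Finset

/-- Every entry lies in `{1, …, n}`. -/
def InRange (n : ℕ) (π : List ℕ) : Prop := ∀ x ∈ π, 1 ≤ x ∧ x ≤ n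

/-- `π` is a parking function in `PF(π.length, n)`: all entries lie in `{1,…,n}` and
for every `i ≤ n`, at least `π.length + i - n` entries are `≤ i`. -/
def IsPF (n : ℕ) (π : List ℕ) : Prop :=
  InRange n π ∧ ∀ i ≤ n, π.length + i - n ≤ π.countP (fun x => decide (x ≤ i))

/-- The parking process: each car `(a, b)` takes the first unoccupied spot in `[a, b]`;
returns the list of spots taken, or `none` if some car fails to park. -/
def parkAux : List (ℕ × ℕ) → Finset ℕ → Option (List ℕ)
  | [], _ => some []
  | c :: rest, occ =>
    if h : ((Finset.Icc c.1 c.2) \ occ).Nonempty then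
      (parkAux rest (insert (((Finset.Icc c.1 c.2) \ occ).min' h) occ)).map
        (fun t => ((Finset.Icc c.1 c.2) \ occ).min' h :: t)
    else none

/-- Outcome (list of spots taken, car by car) of the classical parking process with `n` spots. -/
def outcome (n : ℕ) (π : List ℕ) : Option (List ℕ) :=
  parkAux (π.map (fun p => (p, n))) ∅

/-- The `i`-th (1-indexed) unattempted spot of `π`, equivalently the `i`-th smallest
spot left unoccupied by the parking process. -/
def kspot (n : ℕ) (π : List ℕ) (i : ℕ) : ℕ :=
  (((Finset.Icc 1 n) \ ((outcome n π).getD []).toFinset).sort (· ≤ ·)).getD (i - 1) 0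

/-- Spot (a value in `{1,…,n}`) in which car `i` (0-indexed) parks. -/
def outcomeCoord (n : ℕ) (π : List ℕ) (i : ℕ) : ℕ := ((outcome n π).getD []).getD i 0

/-- Preference list (with values in `{1,…,n}`) associated to `π : Fin m → Fin n`. -/
def toPref {m n : ℕ} (π : Fin m → Fin n) : List ℕ := List.ofFn (fun k => (π k : ℕ) + 1)

/-- The `i`-th (0-indexed) preference, as a value in `{1,…,n}`. -/
def coord {m n : ℕ} (π : Fin m → Fin n) (i : ℕ) : ℕ :=
  if h : i < m then (π ⟨i, h⟩ : ℕ) + 1 else 0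

open scoped Classical in
/-- The finite set of parking functions `PF(m, n)`. -/
noncomputable def PFset (m n : ℕ) : Finset (Fin m → Fin n) :=
  Finset.univ.filter (fun π => IsPF n (toPref π))

/-- Expectation with respect to the uniform measure on `PF(m, n)`. -/
noncomputable def pfE (m n : ℕ) (f : (Fin m → Fin n) → ℝ) : ℝ :=
  (∑ π ∈ PFset m n, f π) / ((PFset m n).card : ℝ)

/-- Variance with respect to the uniform measure on `PF(m, n)`. -/
noncomputable def pfVar (m n : ℕ) (f : (Fin m → Fin n) → ℝ) : ℝ :=
  pfE m n (fun π => f π ^ 2) - (pfE m n f) ^ 2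

/-- Covariance with respect to the uniform measure on `PF(m, n)`. -/
noncomputable def pfCov (m n : ℕ) (f g : (Fin m → Fin n) → ℝ) : ℝ :=
  pfE m n (fun π => f π * g π) - pfE m n f * pfE m n g

/-- `π` is a `u`-parking function of length `r`: it consists of positive integers whose
non-decreasing rearrangement `lam` satisfies `lam i ≤ u i` for all `i`. -/
def IsUPF (r : ℕ) (u : Fin r → ℕ) (π : List ℕ) : Prop :=
  π.length = r ∧ (∀ x ∈ π, 1 ≤ x) ∧
    ∃ lam : List ℕ, π.Perm lam ∧ lam.Pairwise (· ≤ ·) ∧ ∀ i : Fin r, lam.getD i.val 0 ≤ u i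

/-- `(a, b)` is an interval parking function in `IPF(a.length, n)`: car `i` is willing to
park only in the interval `[a i, b i]`, and all cars park successfully. -/
def IsIPF (n : ℕ) (a b : List ℕ) : Prop :=
  a.length = b.length ∧ InRange n a ∧ InRange n b ∧ List.Forall₂ (· ≤ ·) a b ∧
    (parkAux (a.zip b) ∅).isSome = true

open scoped Classical in
/-- The finite set of interval parking functions `IPF(m, n)`. -/
noncomputable def IPFset (m n : ℕ) : Finset ((Fin m → Fin n) × (Fin m → Fin n)) :=
  Finset.univ.filter (fun ab => IsIPF n (toPref ab.1) (toPref ab.2))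
lemma countP_ofFn' {k : ℕ} (f : Fin k → ℕ) (p : ℕ → Bool) :
    (List.ofFn f).countP p = (Finset.univ.filter fun j => p (f j) = true).card := by
  induction k with
  | zero => simp
  | succ k ih =>
    rw [List.ofFn_succ, List.countP_cons, ih, Finset.card_filter, Finset.card_filter,
      Fin.sum_univ_succ]
    cases h : p (f 0) <;> simp [h, add_comm, Function.comp_def]

lemma forall₂_countP_le {l₁ l₂ : List ℕ} (h : List.Forall₂ (· ≤ ·) l₁ l₂) (i : ℕ) :
    l₂.countP (fun x => decide (x ≤ i)) ≤ l₁.countP (fun x => decide (x ≤ i)) := by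
  induction h with
  | nil => simp
  | @cons a b l1 l2 hab htl ih =>
    rw [List.countP_cons, List.countP_cons]
    by_cases hb : b ≤ i
    · have ha : a ≤ i := le_trans hab hb
      simp [ha, hb]; omega
    · simp only [decide_eq_true_eq]
      have h1 : (if b ≤ i then 1 else 0) = 0 := by simp [hb]
      rw [h1]
      omega

lemma sorted_countP_le {l : List ℕ} (hs : l.Pairwise (· ≤ ·)) {j t : ℕ}
    (hj : j < l.length) (ht : t < l[j]) :
    l.countP (fun x => decide (x ≤ t)) ≤ j := by
  have hmono := List.pairwise_iff_getElem.mp hs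
  rw [← List.take_append_drop j l, List.countP_append]
  have h1 : (l.take j).countP (fun x => decide (x ≤ t)) ≤ j := by
    calc _ ≤ (l.take j).length := List.countP_le_length
    _ ≤ j := by simp
  have h2 : (l.drop j).countP (fun x => decide (x ≤ t)) = 0 := by
    rw [List.countP_eq_zero]
    intro a ha
    obtain ⟨k, hk, rfl⟩ := List.mem_iff_getElem.mp ha
    have hjk : j + k < l.length := by simp at hk; omega
    rw [List.getElem_drop]
    simp only [decide_eq_true_eq]
    have : l[j] ≤ l[j + k] := by
      rcases Nat.eq_or_lt_of_le (Nat.le_add_right j k) with h | h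
      · simp [← h]
      · exact hmono j (j+k) hj hjk h
    omega
  omega


set_option maxHeartbeats 1000000 in
/-- Proposition 2.11. For a strictly increasing positive vector `u`,
prepending the missing values `v` of the interval `[u_1, u_m]` produces a parking function
in `PF(u_m - u_1 + 1, u_m)` exactly when `π` is a `u`-parking function. -/
theorem stmt_6 (m : ℕ) (hm : 1 ≤ m) (u : Fin m → ℕ) (hupos : ∀ i, 1 ≤ u i)
    (humono : StrictMono u)
    (L : ℕ) (hL : L = u ⟨m - 1, by omega⟩ - u ⟨0, by omega⟩ + 1 - m)
    (v : Fin L → ℕ) (hvmono : StrictMono v)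
    (hvrange : Set.range v =
      Set.Icc (u ⟨0, by omega⟩) (u ⟨m - 1, by omega⟩) \ Set.range u)
    (π : List ℕ) (hπ : π.length = m) :
    IsPF (u ⟨m - 1, by omega⟩) (List.ofFn v ++ π) ↔ IsUPF m u π := by
  clear hL
  set n := u ⟨m - 1, by omega⟩ with hn
  set u0 := u ⟨0, by omega⟩ with hu0def
  have hmono_le : ∀ (a b : Fin m), a ≤ b → u a ≤ u b := fun a b h => humono.monotone h
  have hu0le : ∀ j, u0 ≤ u j := fun j => hmono_le _ j (by simp [Fin.le_def])
  have hujn : ∀ j, u j ≤ n := fun j => hmono_le j _ (by simp [Fin.le_def]; omega)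
  have hu0n : u0 ≤ n := hu0le _
  have h1u0 : 1 ≤ u0 := hupos _
  have hvmem : ∀ j, v j ∈ Set.Icc u0 n \ Set.range u := by
    intro j; rw [← hvrange]; exact Set.mem_range_self j
  set cu : ℕ → ℕ := fun i => ((Finset.univ : Finset (Fin m)).filter fun j => u j ≤ i).card
    with hcu_def
  set cv : ℕ → ℕ := fun i => ((Finset.univ : Finset (Fin L)).filter fun j => v j ≤ i).card
    with hcv_def
  -- counting lemma
  have hcount : ∀ i ≤ n, cv i + cu i = i + 1 - u0 := by
    intro i hi
    have himg : ((Finset.univ.filter fun j => v j ≤ i).image v) ∪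
        ((Finset.univ.filter fun j => u j ≤ i).image u) = Finset.Icc u0 i := by
      ext x
      simp only [Finset.mem_union, Finset.mem_image, Finset.mem_filter, Finset.mem_univ,
        true_and, Finset.mem_Icc]
      constructor
      · rintro (⟨j, hj, rfl⟩ | ⟨j, hj, rfl⟩)
        · exact ⟨(hvmem j).1.1, hj⟩
        · exact ⟨hu0le j, hj⟩
      · rintro ⟨h1, h2⟩
        by_cases hx : x ∈ Set.range u
        · obtain ⟨j, rfl⟩ := hx; exact Or.inr ⟨j, h2, rfl⟩
        · have : x ∈ Set.range v := by rw [hvrange]; exact ⟨⟨h1, le_trans h2 hi⟩, hx⟩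
          obtain ⟨j, rfl⟩ := this; exact Or.inl ⟨j, h2, rfl⟩
    have hdisj : Disjoint ((Finset.univ.filter fun j => v j ≤ i).image v)
        ((Finset.univ.filter fun j => u j ≤ i).image u) := by
      rw [Finset.disjoint_left]
      rintro x hx1 hx2
      simp only [Finset.mem_image] at hx1 hx2
      obtain ⟨j, _, rfl⟩ := hx1
      obtain ⟨k, _, hk⟩ := hx2
      exact (hvmem j).2 ⟨k, hk⟩
    have := Finset.card_union_of_disjoint hdisj
    rw [himg, Nat.card_Icc, Finset.card_image_of_injective _ hvmono.injective,
      Finset.card_image_of_injective _ humono.injective] at this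
    simp only [hcv_def, hcu_def]
    omega
  have hcun : cu n = m := by
    have : (Finset.univ.filter fun j => u j ≤ n) = Finset.univ :=
      Finset.filter_true_of_mem (fun j _ => hujn j)
    simp [hcu_def, this]
  have hcvn : cv n = L := by
    have : (Finset.univ.filter fun j => v j ≤ n) = Finset.univ :=
      Finset.filter_true_of_mem (fun j _ => (hvmem j).1.2)
    simp [hcv_def, this]
  have hLm : L + m = n + 1 - u0 := by
    have := hcount n le_rfl; omega
  have hcu0 : ∀ i, i < u0 → cu i = 0 := by
    intro i hi
    rw [hcu_def]
    simp only [Finset.card_eq_zero]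
    rw [Finset.filter_eq_empty_iff]
    intro j _
    have := hu0le j; omega
  have hcv_eq : ∀ i, (List.ofFn v).countP (fun x => decide (x ≤ i)) = cv i := by
    intro i; rw [countP_ofFn']; simp [hcv_def]
  have hcu_eq : ∀ i, (List.ofFn u).countP (fun x => decide (x ≤ i)) = cu i := by
    intro i; rw [countP_ofFn']; simp [hcu_def]
  -- IsUPF implies count bounds
  have hUPF_count : IsUPF m u π → ∀ i, cu i ≤ π.countP (fun x => decide (x ≤ i)) := by
    rintro ⟨hlen, hpos, lam, hperm, hsort, hbound⟩ i
    have hlamlen : lam.length = m := hperm.length_eq ▸ hπ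
    have hf2 : List.Forall₂ (· ≤ ·) lam (List.ofFn u) := by
      rw [List.forall₂_iff_get]
      refine ⟨by simp [hlamlen], ?_⟩
      intro k h1 h2
      have hk : k < m := by simpa using h2
      have hb := hbound ⟨k, hk⟩
      simp only [List.get_eq_getElem, List.getElem_ofFn]
      rw [← List.getD_eq_getElem lam 0 h1]
      exact hb
    have hle := forall₂_countP_le hf2 i
    rw [hcu_eq i] at hle
    rw [hperm.countP_eq]
    exact hle
  -- count bounds imply IsUPF
  have hcount_UPF : (∀ i ≤ n, cu i ≤ π.countP (fun x => decide (x ≤ i))) →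
      (∀ x ∈ π, 1 ≤ x) → IsUPF m u π := by
    intro hc hpos
    have hperm : π.Perm (Multiset.sort (π : Multiset ℕ) (· ≤ ·)) :=
      (Multiset.coe_eq_coe.mp (Multiset.sort_eq _ _)).symm
    refine ⟨hπ, hpos, Multiset.sort (π : Multiset ℕ) (· ≤ ·), hperm,
      Multiset.pairwise_sort _ _, ?_⟩
    intro j
    set lam := Multiset.sort (π : Multiset ℕ) ((· ≤ ·) : ℕ → ℕ → Prop) with hlam
    have hlamlen : lam.length = m := hperm.length_eq ▸ hπ
    by_contra hlt
    push_neg at hlt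
    have hjlen : (j : ℕ) < lam.length := by omega
    rw [List.getD_eq_getElem _ _ hjlen] at hlt
    have h1 : lam.countP (fun x => decide (x ≤ u j)) ≤ j :=
      sorted_countP_le (Multiset.pairwise_sort _ _) hjlen hlt
    have h2 : (j : ℕ) + 1 ≤ cu (u j) := by
      rw [hcu_def]
      calc (j : ℕ) + 1 = (Finset.Iic j).card := (Fin.card_Iic j).symm
      _ ≤ _ := Finset.card_le_card (by
          intro k hk
          simp only [Finset.mem_Iic] at hk
          simp only [Finset.mem_filter, Finset.mem_univ, true_and]
          exact hmono_le k j hk)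
    have h3 := hc (u j) (hujn j)
    rw [hperm.countP_eq] at h3
    omega
  constructor
  · rintro ⟨hrange, hpf⟩
    apply hcount_UPF
    · intro i hi
      have hp := hpf i hi
      rw [List.length_append, List.length_ofFn, hπ, List.countP_append, hcv_eq i] at hp
      have hcc := hcount i hi
      rcases lt_or_ge i u0 with hiu | hiu
      · rw [hcu0 i hiu]; omega
      · omega
    · intro x hx; exact (hrange x (by simp [hx])).1
  · intro hU
    have hccu := hUPF_count hU
    constructor
    · intro x hx
      rcases List.mem_append.mp hx with hx | hx
      · obtain ⟨j, rfl⟩ := List.mem_ofFn.mp hx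
        exact ⟨le_trans h1u0 (hvmem j).1.1, (hvmem j).1.2⟩
      · refine ⟨hU.2.1 x hx, ?_⟩
        have hcn := hccu n
        rw [hcun] at hcn
        have hcl : π.countP (fun x => decide (x ≤ n)) = π.length :=
          le_antisymm List.countP_le_length (by omega)
        simpa using List.countP_eq_length.mp hcl x hx
    · intro i hi
      rw [List.length_append, List.length_ofFn, hπ, List.countP_append, hcv_eq i]
      have h4 := hccu i
      have hcc := hcount i hi
      omega
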